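/- For any nondecreasing sequence of critical values τ = (τ_1, …, τ_m) ∈ [0,1]^m such that F_i(τ_k) < 1 for all i and all k, the false discovery rate of the step-down procedure SD(τ) satisfies FDR(SD(τ)) ≤ max_{1 ≤ k ≤ m} (1/k) · Σ_{i=1}^m F_i(τ_k)/(1 − F_i(τ_k)). -/

import Mathlib

open MeasureTheory ProbabilityTheory Finset

/-- Number of rejections of the step-up procedure with critical values `τ 1, …, τ m`
(convention `τ 0 = 0`): the largest `k ∈ {0, …, m}` such that at least `k` of the
p-values are `≤ τ k`. -/
noncomputable def numRejSU (m : ℕ) (τ : ℕ → ℝ) (q : Fin m → ℝ) : ℕ :=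
  sSup {k | k ≤ m ∧ k ≤ (univ.filter (fun j => q j ≤ τ k)).card}

/-- Rejection set of the step-up procedure. -/
noncomputable def rejSU (m : ℕ) (τ : ℕ → ℝ) (q : Fin m → ℝ) : Finset (Fin m) :=
  univ.filter (fun i => q i ≤ τ (numRejSU m τ q))

/-- Number of rejections of the step-down procedure with critical values `τ 1, …, τ m`
(convention `τ 0 = 0`). -/
noncomputable def numRejSD (m : ℕ) (τ : ℕ → ℝ) (q : Fin m → ℝ) : ℕ :=
  sSup {k | k ≤ m ∧ ∀ k' ≤ k, k' ≤ (univ.filter (fun j => q j ≤ τ k')).card}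

/-- Rejection set of the step-down procedure. -/
noncomputable def rejSD (m : ℕ) (τ : ℕ → ℝ) (q : Fin m → ℝ) : Finset (Fin m) :=
  univ.filter (fun i => q i ≤ τ (numRejSD m τ q))

/-- False discovery proportion of a rejection set `R` w.r.t. the set of true nulls `H0`. -/
noncomputable def FDP (m : ℕ) (H0 R : Finset (Fin m)) : ℝ :=
  ((R ∩ H0).card : ℝ) / max (R.card : ℝ) 1

namespace FdrAux

lemma nat_sSup_facts {S : Set ℕ} {m : ℕ} (h0 : 0 ∈ S) (hb : ∀ k ∈ S, k ≤ m) :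
    sSup S ∈ S ∧ sSup S ≤ m ∧ ∀ k ∈ S, k ≤ sSup S := by
  have hne : S.Nonempty := ⟨0, h0⟩
  have hbdd : BddAbove S := ⟨m, fun k hk => hb k hk⟩
  exact ⟨Nat.sSup_mem hne hbdd, hb _ (Nat.sSup_mem hne hbdd), fun k hk => le_csSup hbdd hk⟩

variable (m : ℕ) (τ : ℕ → ℝ) (q : Fin m → ℝ)

/-- number of p-values ≤ τ k -/
noncomputable def cnt (k : ℕ) : ℕ := (univ.filter (fun j => q j ≤ τ k)).card

/-- number of p-values other than i that are ≤ τ k -/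
noncomputable def cntE (i : Fin m) (k : ℕ) : ℕ := ((univ.erase i).filter (fun j => q j ≤ τ k)).card

noncomputable def aIdx (i : Fin m) : ℕ := sSup {k | k ≤ m ∧ ∀ k' ≤ k, k' ≤ cntE m τ q i k'}

noncomputable def bIdx (i : Fin m) : ℕ := sSup {k | k ≤ m ∧ ∀ k' ≤ k, k' - 1 ≤ cntE m τ q i k'}

noncomputable def cIdx (i : Fin m) : ℕ := min (aIdx m τ q i + 1) (bIdx m τ q i)

lemma numRejSD_eq : numRejSD m τ q = sSup {k | k ≤ m ∧ ∀ k' ≤ k, k' ≤ cnt m τ q k'} := rfl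

lemma K_facts : (numRejSD m τ q ≤ m ∧ ∀ k' ≤ numRejSD m τ q, k' ≤ cnt m τ q k') ∧
    ∀ k ≤ m, (∀ k' ≤ k, k' ≤ cnt m τ q k') → k ≤ numRejSD m τ q := by
  have h := nat_sSup_facts (S := {k | k ≤ m ∧ ∀ k' ≤ k, k' ≤ cnt m τ q k'}) (m := m)
    ⟨Nat.zero_le m, fun k' hk' => by omega⟩ (fun k hk => hk.1)
  rw [numRejSD_eq]
  exact ⟨⟨h.1.1, h.1.2⟩, fun k hk h2 => h.2.2 k ⟨hk, h2⟩⟩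

lemma a_facts : (aIdx m τ q i ≤ m ∧ ∀ k' ≤ aIdx m τ q i, k' ≤ cntE m τ q i k') ∧
    ∀ k ≤ m, (∀ k' ≤ k, k' ≤ cntE m τ q i k') → k ≤ aIdx m τ q i := by
  have h := nat_sSup_facts (S := {k | k ≤ m ∧ ∀ k' ≤ k, k' ≤ cntE m τ q i k'}) (m := m)
    ⟨Nat.zero_le m, fun k' hk' => by omega⟩ (fun k hk => hk.1)
  exact ⟨⟨h.1.1, h.1.2⟩, fun k hk h2 => h.2.2 k ⟨hk, h2⟩⟩

lemma b_facts : (bIdx m τ q i ≤ m ∧ ∀ k' ≤ bIdx m τ q i, k' - 1 ≤ cntE m τ q i k') ∧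
    ∀ k ≤ m, (∀ k' ≤ k, k' - 1 ≤ cntE m τ q i k') → k ≤ bIdx m τ q i := by
  have h := nat_sSup_facts (S := {k | k ≤ m ∧ ∀ k' ≤ k, k' - 1 ≤ cntE m τ q i k'}) (m := m)
    ⟨Nat.zero_le m, fun k' hk' => by omega⟩ (fun k hk => hk.1)
  exact ⟨⟨h.1.1, h.1.2⟩, fun k hk h2 => h.2.2 k ⟨hk, h2⟩⟩

lemma one_le_bIdx (hm : 1 ≤ m) : 1 ≤ bIdx m τ q i :=
  (b_facts m τ q).2 1 hm (fun k' hk' => by omega)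

lemma cnt_split (i : Fin m) (k : ℕ) :
    cnt m τ q k = cntE m τ q i k + (if q i ≤ τ k then 1 else 0) := by
  unfold cnt cntE
  conv_lhs => rw [show (univ : Finset (Fin m)) = insert i (univ.erase i) from
    (Finset.insert_erase (mem_univ i)).symm]
  rw [Finset.filter_insert]
  split
  · rw [Finset.card_insert_of_notMem (by simp)]
  · simp

lemma cntE_mono (i : Fin m) (hτmono : ∀ k l, k ≤ l → l ≤ m → τ k ≤ τ l) {k l : ℕ}
    (hkl : k ≤ l) (hl : l ≤ m) : cntE m τ q i k ≤ cntE m τ q i l := by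
  apply Finset.card_le_card
  intro j hj
  simp only [mem_filter] at hj ⊢
  exact ⟨hj.1, le_trans hj.2 (hτmono k l hkl hl)⟩

section Det

variable {m : ℕ} {τ : ℕ → ℝ} {q : Fin m → ℝ} {i : Fin m} {H0 : Finset (Fin m)}

/-- If i is rejected then k̂ = bIdx i and q i ≤ τ (cIdx i). -/
lemma reject_forward (hτmono : ∀ k l, k ≤ l → l ≤ m → τ k ≤ τ l)
    (hqi : q i ≤ τ (numRejSD m τ q)) :
    numRejSD m τ q = bIdx m τ q i ∧ q i ≤ τ (cIdx m τ q i) := by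
  set K := numRejSD m τ q with hKdef
  obtain ⟨⟨hKm, hKcnt⟩, hKmax⟩ := K_facts m τ q
  obtain ⟨⟨hbm, hbcnt⟩, hbmax⟩ := b_facts m τ q (i := i)
  obtain ⟨⟨ham, hacnt⟩, hamax⟩ := a_facts m τ q (i := i)
  have hbK : K ≤ bIdx m τ q i := by
    apply hbmax K hKm
    intro k' hk'
    have h1 := hKcnt k' hk'
    have h2 := cnt_split m τ q i k'
    by_cases hq : q i ≤ τ k' <;> [rw [if_pos hq] at h2; rw [if_neg hq] at h2] <;> omega
  have hKb : bIdx m τ q i ≤ K := by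
    apply hKmax _ hbm
    intro k' hk'
    by_cases hk'K : k' ≤ K
    · exact hKcnt k' hk'K
    · have hqk' : q i ≤ τ k' := le_trans hqi (hτmono K k' (by omega) (le_trans hk' hbm))
      have h2 := cnt_split m τ q i k'
      rw [if_pos hqk'] at h2
      have h3 := hbcnt k' hk'
      omega
  have hKeqb : K = bIdx m τ q i := le_antisymm hbK hKb
  refine ⟨hKeqb, ?_⟩
  by_cases hab : bIdx m τ q i ≤ aIdx m τ q i + 1
  · have hcb : cIdx m τ q i = bIdx m τ q i := min_eq_right hab
    rw [hcb, ← hKeqb]; exact hqi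
  · push_neg at hab
    have hc : cIdx m τ q i = aIdx m τ q i + 1 := min_eq_left (by omega)
    rw [hc]
    by_contra hnc
    have ha1m : aIdx m τ q i + 1 ≤ m := le_trans (by omega) hbm
    have hcntEa : cntE m τ q i (aIdx m τ q i + 1) ≤ aIdx m τ q i := by
      by_contra hcE
      push_neg at hcE
      have hall : ∀ k' ≤ aIdx m τ q i + 1, k' ≤ cntE m τ q i k' := by
        intro k' hk'
        by_cases h : k' ≤ aIdx m τ q i
        · exact hacnt k' h
        · have hk'e : k' = aIdx m τ q i + 1 := by omega
          subst hk'e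
          omega
      have := hamax (aIdx m τ q i + 1) ha1m hall
      omega
    have h2 := cnt_split m τ q i (aIdx m τ q i + 1)
    rw [if_neg hnc] at h2
    have h3 := hKcnt (aIdx m τ q i + 1) (by omega)
    omega

/-- If q i ≤ τ (cIdx i) then i is rejected. -/
lemma reject_backward (hτmono : ∀ k l, k ≤ l → l ≤ m → τ k ≤ τ l)
    (hqi : q i ≤ τ (cIdx m τ q i)) : q i ≤ τ (numRejSD m τ q) := by
  obtain ⟨⟨hKm, hKcnt⟩, hKmax⟩ := K_facts m τ q
  obtain ⟨⟨hbm, hbcnt⟩, hbmax⟩ := b_facts m τ q (i := i)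
  obtain ⟨⟨ham, hacnt⟩, hamax⟩ := a_facts m τ q (i := i)
  have hbK : bIdx m τ q i ≤ numRejSD m τ q := by
    apply hKmax _ hbm
    intro k' hk'
    have h2 := cnt_split m τ q i k'
    by_cases hk'a : k' ≤ aIdx m τ q i
    · have := hacnt k' hk'a
      by_cases hq : q i ≤ τ k' <;> [rw [if_pos hq] at h2; rw [if_neg hq] at h2] <;> omega
    · push_neg at hk'a
      have hck' : cIdx m τ q i ≤ k' := le_trans (min_le_left _ _) hk'a
      have hqk' : q i ≤ τ k' := le_trans hqi (hτmono _ k' hck' (le_trans hk' hbm))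
      rw [if_pos hqk'] at h2
      have h3 := hbcnt k' hk'
      omega
  have hcb : cIdx m τ q i ≤ bIdx m τ q i := min_le_right _ _
  exact le_trans hqi (hτmono _ _ (le_trans hcb hbK) (K_facts m τ q).1.1)

/-- If i is not rejected and k̂ < m, then cIdx i = k̂ + 1 ≤ bIdx i. -/
lemma nonreject_struct (hτmono : ∀ k l, k ≤ l → l ≤ m → τ k ≤ τ l)
    (hni : ¬ q i ≤ τ (numRejSD m τ q)) (hKm : numRejSD m τ q < m) :
    cIdx m τ q i = numRejSD m τ q + 1 ∧ numRejSD m τ q + 1 ≤ bIdx m τ q i := by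
  set K := numRejSD m τ q with hKdef
  obtain ⟨⟨hKle, hKcnt⟩, hKmax⟩ := K_facts m τ q
  obtain ⟨⟨hbm, hbcnt⟩, hbmax⟩ := b_facts m τ q (i := i)
  obtain ⟨⟨ham, hacnt⟩, hamax⟩ := a_facts m τ q (i := i)
  have hqk' : ∀ k' ≤ K, ¬ q i ≤ τ k' := by
    intro k' hk' h
    exact hni (le_trans h (hτmono k' K hk' hKle))
  have hcntE_eq : ∀ k' ≤ K, cntE m τ q i k' = cnt m τ q k' := by
    intro k' hk'
    have h2 := cnt_split m τ q i k'
    rw [if_neg (hqk' k' hk')] at h2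
    omega
  have hbK1 : K + 1 ≤ bIdx m τ q i := by
    apply hbmax (K + 1) (by omega)
    intro k' hk'
    by_cases h : k' ≤ K
    · have h1 := hKcnt k' h
      have h2 := hcntE_eq k' h
      omega
    · have hk'' : k' = K + 1 := by omega
      subst hk''
      have h1 : cntE m τ q i K ≤ cntE m τ q i (K + 1) :=
        cntE_mono m τ q i hτmono (by omega) (by omega)
      have h2 := hcntE_eq K le_rfl
      have h3 := hKcnt K le_rfl
      omega
  have haK : aIdx m τ q i ≤ K := by
    by_contra h
    push_neg at h
    have : K + 1 ≤ K := by
      apply hKmax (K + 1) (by omega)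
      intro k' hk'
      have h1 := hacnt k' (by omega)
      have h2 := cnt_split m τ q i k'
      by_cases hq : q i ≤ τ k' <;> [rw [if_pos hq] at h2; rw [if_neg hq] at h2] <;> omega
    omega
  have haK' : K ≤ aIdx m τ q i := by
    apply hamax K hKle
    intro k' hk'
    have h1 := hKcnt k' hk'
    have h2 := hcntE_eq k' hk'
    omega
  have haeq : aIdx m τ q i = K := le_antisymm haK haK'
  constructor
  · rw [cIdx, haeq]
    exact min_eq_left (by omega)
  · exact hbK1

/-- If k̂ = m then everything is rejected. -/
lemma K_eq_m_reject (hK : numRejSD m τ q = m) : q i ≤ τ (numRejSD m τ q) := by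
  obtain ⟨⟨hKle, hKcnt⟩, _⟩ := K_facts m τ q
  have h1 : m ≤ cnt m τ q (numRejSD m τ q) := by
    have := hKcnt (numRejSD m τ q) le_rfl
    omega
  have h2 : (univ.filter (fun j => q j ≤ τ (numRejSD m τ q))) = univ := by
    apply Finset.eq_univ_of_card
    have hle := Finset.card_filter_le (univ : Finset (Fin m)) (fun j => q j ≤ τ (numRejSD m τ q))
    simp only [Finset.card_univ, Fintype.card_fin] at hle ⊢
    exact le_antisymm hle h1
  have := Finset.mem_filter.mp (h2 ▸ Finset.mem_univ i)
  exact this.2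

/-- i rejected implies 1 ≤ k̂. -/
lemma one_le_K_of_reject (hm : 1 ≤ m) (hτ0 : τ 0 = 0)
    (hτ01 : ∀ k ≤ m, τ k ∈ Set.Icc (0:ℝ) 1) (hq0 : ∀ j, 0 ≤ q j)
    (hqi : q i ≤ τ (numRejSD m τ q)) : 1 ≤ numRejSD m τ q := by
  obtain ⟨⟨hKle, hKcnt⟩, hKmax⟩ := K_facts m τ q
  by_contra h
  push_neg at h
  have hK0 : numRejSD m τ q = 0 := by omega
  rw [hK0, hτ0] at hqi
  have hq00 : q i = 0 := le_antisymm hqi (hq0 i)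
  have h1 : 1 ≤ cnt m τ q 1 := by
    rw [cnt]
    refine Finset.card_pos.mpr ⟨i, Finset.mem_filter.mpr ⟨Finset.mem_univ i, ?_⟩⟩
    rw [hq00]
    exact (hτ01 1 hm).1
  have : 1 ≤ numRejSD m τ q := by
    apply hKmax 1 hm
    intro k' hk'
    interval_cases k'
    · omega
    · exact h1
  omega

lemma card_rejSD : (rejSD m τ q).card = cnt m τ q (numRejSD m τ q) := rfl

/-- Deterministic FDP bound. -/
lemma FDP_le_sum (hm : 1 ≤ m) (hτ0 : τ 0 = 0)
    (hτmono : ∀ k l, k ≤ l → l ≤ m → τ k ≤ τ l)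
    (hτ01 : ∀ k ≤ m, τ k ∈ Set.Icc (0:ℝ) 1) (hq0 : ∀ j, 0 ≤ q j) :
    FDP m H0 (rejSD m τ q) ≤
      ∑ i ∈ H0, (if q i ≤ τ (cIdx m τ q i) then ((bIdx m τ q i : ℝ))⁻¹ else 0) := by
  classical
  have hterm_nonneg : ∀ i ∈ H0,
      (0:ℝ) ≤ (if q i ≤ τ (cIdx m τ q i) then ((bIdx m τ q i : ℝ))⁻¹ else 0) := by
    intro j _
    split
    · positivity
    · exact le_refl 0
  by_cases hRH : (rejSD m τ q ∩ H0).card = 0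
  · rw [FDP, hRH]
    simp only [Nat.cast_zero, zero_div]
    exact Finset.sum_nonneg hterm_nonneg
  · obtain ⟨j, hj⟩ := Finset.card_ne_zero.mp hRH
    have hjR : j ∈ rejSD m τ q := (Finset.mem_inter.mp hj).1
    have hqj : q j ≤ τ (numRejSD m τ q) := (Finset.mem_filter.mp hjR).2
    have hK1 : 1 ≤ numRejSD m τ q := one_le_K_of_reject hm hτ0 hτ01 hq0 hqj
    have hKcard : numRejSD m τ q ≤ (rejSD m τ q).card := by
      rw [card_rejSD]
      exact (K_facts m τ q).1.2 _ le_rfl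
    have hcardpos : 1 ≤ (rejSD m τ q).card := le_trans hK1 hKcard
    have hmax : max ((rejSD m τ q).card : ℝ) 1 = ((rejSD m τ q).card : ℝ) :=
      max_eq_left (by exact_mod_cast hcardpos)
    rw [FDP, hmax]
    have hint : ((rejSD m τ q ∩ H0).card : ℝ)
        = ∑ i ∈ H0, (if i ∈ rejSD m τ q then (1:ℝ) else 0) := by
      rw [Finset.inter_comm, ← Finset.filter_mem_eq_inter, Finset.card_filter]
      push_cast
      rfl
    rw [hint, Finset.sum_div]
    apply Finset.sum_le_sum
    intro i hi
    by_cases hiR : i ∈ rejSD m τ q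
    · rw [if_pos hiR]
      have hqi : q i ≤ τ (numRejSD m τ q) := (Finset.mem_filter.mp hiR).2
      obtain ⟨hKb, hqc⟩ := reject_forward hτmono hqi
      rw [if_pos hqc, one_div]
      have hbpos : 0 < (bIdx m τ q i : ℝ) := by
        have := one_le_bIdx m τ q (i := i) hm
        exact_mod_cast Nat.lt_of_lt_of_le Nat.zero_lt_one this
      apply inv_anti₀ hbpos
      have : bIdx m τ q i ≤ (rejSD m τ q).card := hKb ▸ hKcard
      exact_mod_cast this
    · rw [if_neg hiR, zero_div]
      exact hterm_nonneg i hi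

/-- Pathwise aggregation bound. -/
lemma agg_le (hm : 1 ≤ m) (hτmono : ∀ k l, k ≤ l → l ≤ m → τ k ≤ τ l)
    (g : Fin m → ℕ → ℝ) (hg : ∀ (i : Fin m) k, 1 ≤ k → k ≤ m → 0 ≤ g i k) :
    ∑ i ∈ H0, (if q i ≤ τ (cIdx m τ q i) then 0 else g i (cIdx m τ q i) / (bIdx m τ q i)) ≤
      (Finset.Icc 1 m).sup' (Finset.nonempty_Icc.mpr hm)
        (fun k => (1 / (k : ℝ)) * ∑ i : Fin m, g i k) := by
  classical
  have hne : (Finset.Icc 1 m).Nonempty := Finset.nonempty_Icc.mpr hm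
  by_cases hK : numRejSD m τ q = m
  · have hall : ∀ i : Fin m, q i ≤ τ (cIdx m τ q i) := fun i =>
      (reject_forward hτmono (K_eq_m_reject hK)).2
    rw [Finset.sum_congr rfl (fun i _ => if_pos (hall i))]
    rw [Finset.sum_const, smul_zero]
    refine le_trans ?_ (Finset.le_sup' _ (Finset.mem_Icc.mpr ⟨le_rfl, hm⟩))
    have : 0 ≤ ∑ i : Fin m, g i 1 := Finset.sum_nonneg fun i _ => hg i 1 le_rfl hm
    positivity
  · have hKm : numRejSD m τ q < m := lt_of_le_of_ne (K_facts m τ q).1.1 hK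
    set K := numRejSD m τ q with hKdef
    have hgK1 : ∀ i : Fin m, 0 ≤ g i (K + 1) := fun i => hg i (K + 1) (by omega) (by omega)
    have hstep : ∀ i ∈ H0,
        (if q i ≤ τ (cIdx m τ q i) then 0 else g i (cIdx m τ q i) / (bIdx m τ q i))
          ≤ g i (K + 1) / ((K : ℝ) + 1) := by
      intro i _
      by_cases hq : q i ≤ τ (cIdx m τ q i)
      · rw [if_pos hq]
        have := hgK1 i
        positivity
      · rw [if_neg hq]
        have hni : ¬ q i ≤ τ K := fun h => hq (reject_forward hτmono h).2
        obtain ⟨hc, hb⟩ := nonreject_struct hτmono hni hKm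
        rw [hc]
        have hb' : ((K : ℝ) + 1) ≤ (bIdx m τ q i : ℝ) := by exact_mod_cast hb
        have hKpos : (0:ℝ) < (K : ℝ) + 1 := by positivity
        push_cast
        gcongr
        exact hgK1 i
    calc ∑ i ∈ H0, (if q i ≤ τ (cIdx m τ q i) then 0
            else g i (cIdx m τ q i) / (bIdx m τ q i))
        ≤ ∑ i ∈ H0, g i (K + 1) / ((K : ℝ) + 1) := Finset.sum_le_sum hstep
      _ ≤ ∑ i : Fin m, g i (K + 1) / ((K : ℝ) + 1) := by
          apply Finset.sum_le_sum_of_subset_of_nonneg (Finset.subset_univ H0)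
          intro i _ _
          have := hgK1 i
          positivity
      _ = (1 / ((K : ℝ) + 1)) * ∑ i : Fin m, g i (K + 1) := by
          rw [← Finset.sum_div]
          ring
      _ ≤ (Finset.Icc 1 m).sup' hne (fun k => (1 / (k : ℝ)) * ∑ i : Fin m, g i k) := by
          have hmem : K + 1 ∈ Finset.Icc 1 m := Finset.mem_Icc.mpr ⟨by omega, by omega⟩
          have := Finset.le_sup' (fun k : ℕ => (1 / (k : ℝ)) * ∑ i : Fin m, g i k) hmem
          simpa only [Nat.cast_add, Nat.cast_one] using this

end Det
section Fact

variable (m : ℕ) (τ : ℕ → ℝ) (q : Fin m → ℝ)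

noncomputable def aOf (n : Fin (m+1) → ℕ) : ℕ :=
  sSup {k | k ≤ m ∧ ∀ k' : Fin (m+1), (k' : ℕ) ≤ k → (k' : ℕ) ≤ n k'}

noncomputable def bOf (n : Fin (m+1) → ℕ) : ℕ :=
  sSup {k | k ≤ m ∧ ∀ k' : Fin (m+1), (k' : ℕ) ≤ k → (k' : ℕ) - 1 ≤ n k'}

noncomputable def cntV {m : ℕ} (τ : ℕ → ℝ) (i : Fin m)
    (v : {x // x ∈ Finset.univ.erase i} → ℝ) (k : ℕ) : ℕ :=
  (univ.filter (fun j : {x // x ∈ Finset.univ.erase i} => v j ≤ τ k)).card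

lemma cntE_eq_cntV (i : Fin m) (k : ℕ) :
    cntE m τ q i k = cntV τ i (fun j => q j.1) k := by
  unfold cntE cntV
  symm
  apply Finset.card_bij (fun a _ => a.1)
  · intro a ha
    simp only [Finset.mem_filter, Finset.mem_univ, true_and] at ha
    simp only [Finset.mem_filter]
    exact ⟨a.2, ha⟩
  · intro a _ b _ hab
    exact Subtype.ext hab
  · intro b hb
    simp only [Finset.mem_filter] at hb
    exact ⟨⟨b, hb.1⟩, by simp only [Finset.mem_filter, Finset.mem_univ, true_and]; exact hb.2, rfl⟩

lemma aIdx_eq_aOf (i : Fin m) :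
    aIdx m τ q i = aOf m (fun k : Fin (m+1) => cntE m τ q i (k : ℕ)) := by
  unfold aIdx aOf
  congr 1
  ext k
  simp only [Set.mem_setOf_eq, and_congr_right_iff]
  intro hk
  constructor
  · intro h k' hk'
    exact h (k' : ℕ) hk'
  · intro h k' hk'
    have hk'm : k' < m + 1 := by omega
    have := h ⟨k', hk'm⟩ (by simpa using hk')
    simpa using this

lemma bIdx_eq_bOf (i : Fin m) :
    bIdx m τ q i = bOf m (fun k : Fin (m+1) => cntE m τ q i (k : ℕ)) := by
  unfold bIdx bOf
  congr 1
  ext k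
  simp only [Set.mem_setOf_eq, and_congr_right_iff]
  intro hk
  constructor
  · intro h k' hk'
    exact h (k' : ℕ) hk'
  · intro h k' hk'
    have hk'm : k' < m + 1 := by omega
    have := h ⟨k', hk'm⟩ (by simpa using hk')
    simpa using this

lemma cIdx_bounds (hm : 1 ≤ m) (i : Fin m) :
    1 ≤ cIdx m τ q i ∧ cIdx m τ q i ≤ m := by
  have h1 := one_le_bIdx m τ q (i := i) hm
  have h2 := (b_facts m τ q (i := i)).1.1
  unfold cIdx
  omega

lemma cntE_congr {m : ℕ} (τ : ℕ → ℝ) {q q' : Fin m → ℝ} (i : Fin m)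
    (h : ∀ j ≠ i, q' j = q j) (k : ℕ) : cntE m τ q' i k = cntE m τ q i k := by
  unfold cntE
  apply Finset.card_bij (fun a _ => a)
  · intro a ha
    simp only [Finset.mem_filter, Finset.mem_erase] at ha ⊢
    rw [h a ha.1.1] at ha
    exact ha
  · intro a ha b hb hab
    exact hab
  · intro b hb
    refine ⟨b, ?_, rfl⟩
    simp only [Finset.mem_filter, Finset.mem_erase] at hb ⊢
    rw [← h b hb.1.1] at hb
    exact hb

end Fact
end FdrAux

open FdrAux in
/-- non-adaptive heterogeneous FDR bound for the step-down procedure. -/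
theorem fdr_sd_le_nonadaptive_bound
    {Ω : Type*} [MeasurableSpace Ω] (P : Measure Ω) [IsProbabilityMeasure P]
    (m : ℕ) (hm : 1 ≤ m)
    (p : Fin m → Ω → ℝ) (hmeas : ∀ i, Measurable (p i))
    (hp01 : ∀ i ω, p i ω ∈ Set.Icc (0 : ℝ) 1)
    (hindep : iIndepFun p P)
    (H0 : Finset (Fin m))
    (F : Fin m → ℝ → ℝ)
    (hFmono : ∀ i, MonotoneOn (F i) (Set.Icc 0 1))
    (hFrange : ∀ i, ∀ t ∈ Set.Icc (0 : ℝ) 1, F i t ∈ Set.Icc (0 : ℝ) 1)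
    (hF0 : ∀ i, F i 0 = 0) (hF1 : ∀ i, F i 1 = 1)
    (hnull : ∀ i ∈ H0, ∀ t ∈ Set.Icc (0 : ℝ) 1,
      P {ω | p i ω ≤ t} ≤ ENNReal.ofReal (F i t))
    (τ : ℕ → ℝ) (hτ0 : τ 0 = 0)
    (hτmono : ∀ k l, k ≤ l → l ≤ m → τ k ≤ τ l)
    (hτ01 : ∀ k ≤ m, τ k ∈ Set.Icc (0 : ℝ) 1)
    (hFτk : ∀ i, ∀ k, 1 ≤ k → k ≤ m → F i (τ k) < 1) :
    ∫ ω, FDP m H0 (rejSD m τ (fun j => p j ω)) ∂P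
      ≤ (Finset.Icc 1 m).sup' (Finset.nonempty_Icc.mpr hm)
          (fun k => (1 / (k : ℝ)) * ∑ i : Fin m, F i (τ k) / (1 - F i (τ k))) := by
  classical
  set g : Fin m → ℕ → ℝ := fun i k => F i (τ k) / (1 - F i (τ k)) with hg_def
  set Bc : ℝ := (Finset.Icc 1 m).sup' (Finset.nonempty_Icc.mpr hm)
      (fun k => (1 / (k : ℝ)) * ∑ i : Fin m, F i (τ k) / (1 - F i (τ k))) with hBc
  have hg_nonneg : ∀ (i : Fin m) k, 1 ≤ k → k ≤ m → 0 ≤ g i k := by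
    intro i k h1 h2
    have hF0' : 0 ≤ F i (τ k) := (hFrange i (τ k) (hτ01 k h2)).1
    have hF1' : F i (τ k) < 1 := hFτk i k h1 h2
    have : 0 < 1 - F i (τ k) := by linarith
    exact div_nonneg hF0' this.le
  -- random indices (functions of p_{-i})
  set bC : Fin m → Ω → ℕ := fun i ω => bIdx m τ (fun j => p j ω) i with hbC
  set cC : Fin m → Ω → ℕ := fun i ω => cIdx m τ (fun j => p j ω) i with hcC
  set D : Finset (ℕ × ℕ) := Finset.Icc 1 m ×ˢ Finset.Icc 1 m with hD
  set Ef : Fin m → ℕ → Set Ω := fun i k => {ω | p i ω ≤ τ k} with hEf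
  set Af : Fin m → ℕ × ℕ → Set Ω := fun i bc => {ω | bC i ω = bc.1 ∧ cC i ω = bc.2} with hAf
  set f : Fin m → Ω → ℝ := fun i ω =>
    ∑ bc ∈ D, (Ef i bc.2 ∩ Af i bc).indicator (fun _ => ((bc.1 : ℝ))⁻¹) ω with hf
  set h : Fin m → Ω → ℝ := fun i ω =>
    ∑ bc ∈ D, ((Ef i bc.2)ᶜ ∩ Af i bc).indicator (fun _ => g i bc.2 / (bc.1 : ℝ)) ω with hh
  have hbc_mem : ∀ (i : Fin m) ω, (bC i ω, cC i ω) ∈ D := by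
    intro i ω
    have h1 := one_le_bIdx m τ (fun j => p j ω) (i := i) hm
    have h2 := (b_facts m τ (fun j => p j ω) (i := i)).1.1
    have h3 := cIdx_bounds m τ (fun j => p j ω) hm i
    simp only [hD, Finset.mem_product, Finset.mem_Icc]
    exact ⟨⟨h1, h2⟩, h3⟩
  -- pointwise identification of f
  have hfval : ∀ (i : Fin m) ω,
      f i ω = if p i ω ≤ τ (cC i ω) then ((bC i ω : ℝ))⁻¹ else 0 := by
    intro i ω
    simp only [hf]
    rw [Finset.sum_eq_single (bC i ω, cC i ω)]
    · by_cases hpc : p i ω ≤ τ (cC i ω)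
      · rw [if_pos hpc]
        refine Set.indicator_of_mem ?_ _
        exact ⟨hpc, rfl, rfl⟩
      · rw [if_neg hpc]
        exact Set.indicator_of_notMem (fun hmem => hpc hmem.1) _
    · intro bc _ hne
      apply Set.indicator_of_notMem
      rintro ⟨h1, h2, h3⟩
      exact hne (Prod.ext_iff.mpr ⟨h2.symm, h3.symm⟩)
    · intro hnot
      exact absurd (hbc_mem i ω) hnot
  have hhval : ∀ (i : Fin m) ω,
      h i ω = if p i ω ≤ τ (cC i ω) then 0 else g i (cC i ω) / ((bC i ω : ℝ)) := by
    intro i ω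
    simp only [hh]
    rw [Finset.sum_eq_single (bC i ω, cC i ω)]
    · by_cases hpc : p i ω ≤ τ (cC i ω)
      · rw [if_pos hpc]
        exact Set.indicator_of_notMem (fun hmem => hmem.1 hpc) _
      · rw [if_neg hpc]
        refine Set.indicator_of_mem ?_ _
        exact ⟨hpc, rfl, rfl⟩
    · intro bc _ hne
      apply Set.indicator_of_notMem
      rintro ⟨h1, h2, h3⟩
      exact hne (Prod.ext_iff.mpr ⟨h2.symm, h3.symm⟩)
    · intro hnot
      exact absurd (hbc_mem i ω) hnot
  -- pointwise bounds
  have hFDPle : ∀ ω, FDP m H0 (rejSD m τ (fun j => p j ω)) ≤ ∑ i ∈ H0, f i ω := by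
    intro ω
    refine le_trans (FDP_le_sum hm hτ0 hτmono hτ01 (fun j => (hp01 j ω).1)) (le_of_eq ?_)
    exact Finset.sum_congr rfl (fun i _ => (hfval i ω).symm)
  have hhle : ∀ ω, ∑ i ∈ H0, h i ω ≤ Bc := by
    intro ω
    have hA := agg_le (q := fun j => p j ω) (H0 := H0) hm hτmono g hg_nonneg
    refine le_trans (le_of_eq ?_) hA
    exact Finset.sum_congr rfl (fun i _ => hhval i ω)
  -- measurability and independence
  have hEmeas : ∀ (i : Fin m) k, MeasurableSet (Ef i k) :=
    fun i k => measurableSet_le (hmeas i) measurable_const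
  have hZ : ∀ i : Fin m, Measurable (fun ω => (bC i ω, cC i ω))
      ∧ IndepFun (p i) (fun ω => (bC i ω, cC i ω)) P := by
    intro i
    set ζ : ({x // x ∈ Finset.univ.erase i} → ℝ) → ℕ × ℕ := fun v =>
      ((fun n : Fin (m+1) → ℕ => (bOf m n, min (aOf m n + 1) (bOf m n)))
        (fun k : Fin (m+1) => cntV τ i v (k : ℕ))) with hζ
    have hζmeas : Measurable ζ := by
      apply Measurable.comp (f := fun v (k : Fin (m+1)) => cntV τ i v (k : ℕ))
        (g := fun n : Fin (m+1) → ℕ => (bOf m n, min (aOf m n + 1) (bOf m n)))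
      · exact Measurable.of_discrete
      · apply measurable_pi_lambda
        intro k
        have hsum : (fun v : ({x // x ∈ Finset.univ.erase i} → ℝ) => cntV τ i v (k : ℕ))
            = fun v => ∑ j : {x // x ∈ Finset.univ.erase i},
                if v j ≤ τ (k : ℕ) then 1 else 0 := by
          funext v
          rw [cntV, Finset.card_filter]
        rw [hsum]
        exact Finset.measurable_sum _ (fun j _ =>
          Measurable.ite (measurableSet_le (measurable_pi_apply j) measurable_const)
            measurable_const measurable_const)
    have hY : Measurable (fun ω (j : {x // x ∈ Finset.univ.erase i}) => p j.1 ω) :=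
      measurable_pi_lambda _ (fun j => hmeas j.1)
    have hZeq : (fun ω => (bC i ω, cC i ω))
        = ζ ∘ (fun ω (j : {x // x ∈ Finset.univ.erase i}) => p j.1 ω) := by
      funext ω
      have hb := bIdx_eq_bOf m τ (fun j => p j ω) i
      have ha := aIdx_eq_aOf m τ (fun j => p j ω) i
      have hcnt : ∀ k : Fin (m+1), cntE m τ (fun j => p j ω) i (k : ℕ)
          = cntV τ i (fun j : {x // x ∈ Finset.univ.erase i} => p j.1 ω) (k : ℕ) :=
        fun k => cntE_eq_cntV m τ (fun j => p j ω) i (k : ℕ)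
      show (bC i ω, cC i ω) = _
      rw [hbC, hcC]
      simp only [Function.comp_apply, hζ]
      congr 1
      · rw [hb]
        congr 1
        funext k
        exact hcnt k
      · rw [cIdx, ha, hb]
        congr 2
        · congr 1
          funext k
          exact hcnt k
        · congr 1
          funext k
          exact hcnt k
    have hdisj : Disjoint ({i} : Finset (Fin m)) (Finset.univ.erase i) := by
      simp [Finset.disjoint_singleton_left]
    have base := hindep.indepFun_finset {i} (Finset.univ.erase i) hdisj hmeas
    have heval : Measurable
        (fun v : ({x // x ∈ ({i} : Finset (Fin m))} → ℝ) =>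
          v ⟨i, Finset.mem_singleton_self i⟩) := measurable_pi_apply _
    have hcomp := base.comp heval hζmeas
    constructor
    · rw [hZeq]
      exact hζmeas.comp hY
    · rw [hZeq]
      exact hcomp
  have hAconv : ∀ (i : Fin m) bc, Af i bc = (fun ω => (bC i ω, cC i ω)) ⁻¹' {bc} := by
    intro i bc
    ext ω
    simp [hAf, Prod.ext_iff]
  have hAmeas : ∀ (i : Fin m) bc, MeasurableSet (Af i bc) := by
    intro i bc
    rw [hAconv]
    exact (hZ i).1 (measurableSet_singleton bc)
  have hprod : ∀ (i : Fin m) bc,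
      P (Ef i bc.2 ∩ Af i bc) = P (Ef i bc.2) * P (Af i bc) := by
    intro i bc
    have := (hZ i).2.measure_inter_preimage_eq_mul (Set.Iic (τ bc.2)) {bc}
      measurableSet_Iic (measurableSet_singleton _)
    rw [hAconv i bc]
    exact this
  have hprodc : ∀ (i : Fin m) bc,
      P ((Ef i bc.2)ᶜ ∩ Af i bc) = P ((Ef i bc.2)ᶜ) * P (Af i bc) := by
    intro i bc
    have := (hZ i).2.measure_inter_preimage_eq_mul (Set.Iic (τ bc.2))ᶜ {bc}
      measurableSet_Iic.compl (measurableSet_singleton _)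
    rw [hAconv i bc]
    exact this
  -- integrability
  have hf_int : ∀ i : Fin m, Integrable (f i) P := by
    intro i
    simp only [hf]
    apply integrable_finset_sum
    intro bc _
    exact (integrable_const _).indicator ((hEmeas i bc.2).inter (hAmeas i bc))
  have hh_int : ∀ i : Fin m, Integrable (h i) P := by
    intro i
    simp only [hh]
    apply integrable_finset_sum
    intro bc _
    exact (integrable_const _).indicator (((hEmeas i bc.2).compl).inter (hAmeas i bc))
  -- integral values
  have hfint_eq : ∀ i : Fin m, ∫ ω, f i ω ∂P
      = ∑ bc ∈ D, (P (Ef i bc.2 ∩ Af i bc)).toReal * ((bc.1 : ℝ))⁻¹ := by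
    intro i
    simp only [hf]
    rw [integral_finset_sum _ (fun bc _ =>
      (integrable_const _).indicator ((hEmeas i bc.2).inter (hAmeas i bc)))]
    refine Finset.sum_congr rfl (fun bc _ => ?_)
    rw [integral_indicator_const _ ((hEmeas i bc.2).inter (hAmeas i bc)), smul_eq_mul]
    rfl
  have hhint_eq : ∀ i : Fin m, ∫ ω, h i ω ∂P
      = ∑ bc ∈ D, (P ((Ef i bc.2)ᶜ ∩ Af i bc)).toReal * (g i bc.2 / (bc.1 : ℝ)) := by
    intro i
    simp only [hh]
    rw [integral_finset_sum _ (fun bc _ =>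
      (integrable_const _).indicator (((hEmeas i bc.2).compl).inter (hAmeas i bc)))]
    refine Finset.sum_congr rfl (fun bc _ => ?_)
    rw [integral_indicator_const _ (((hEmeas i bc.2).compl).inter (hAmeas i bc)), smul_eq_mul]
    rfl
  -- key per-i comparison
  have hkey : ∀ i ∈ H0, ∫ ω, f i ω ∂P ≤ ∫ ω, h i ω ∂P := by
    intro i hi
    rw [hfint_eq i, hhint_eq i]
    apply Finset.sum_le_sum
    intro bc hbc
    obtain ⟨hbmem, hcmem⟩ := Finset.mem_product.mp hbc
    obtain ⟨hb1, hbm'⟩ := Finset.mem_Icc.mp hbmem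
    obtain ⟨hc1, hcm⟩ := Finset.mem_Icc.mp hcmem
    have hτc : τ bc.2 ∈ Set.Icc (0:ℝ) 1 := hτ01 bc.2 hcm
    have hFc0 : 0 ≤ F i (τ bc.2) := (hFrange i (τ bc.2) hτc).1
    have hFc1 : F i (τ bc.2) < 1 := hFτk i bc.2 hc1 hcm
    set x := (P (Ef i bc.2)).toReal with hx
    have hxF : x ≤ F i (τ bc.2) :=
      ENNReal.toReal_le_of_le_ofReal hFc0 (hnull i hi (τ bc.2) hτc)
    have hx0 : 0 ≤ x := ENNReal.toReal_nonneg
    have hcompl : (P ((Ef i bc.2)ᶜ)).toReal = 1 - x := by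
      rw [prob_compl_eq_one_sub (hEmeas i bc.2),
        ENNReal.toReal_sub_of_le prob_le_one ENNReal.one_ne_top, ENNReal.toReal_one]
    rw [hprod i bc, hprodc i bc, ENNReal.toReal_mul, ENNReal.toReal_mul, hcompl]
    set w := (P (Af i bc)).toReal with hw
    have hw0 : 0 ≤ w := ENNReal.toReal_nonneg
    have hbpos : (0:ℝ) < (bc.1 : ℝ) := by exact_mod_cast hb1
    have h1F : (0:ℝ) < 1 - F i (τ bc.2) := by linarith
    have hstep : x ≤ (1 - x) * g i bc.2 := by
      rw [hg_def]
      rw [mul_div_assoc']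
      rw [le_div_iff₀ h1F]
      nlinarith
    calc x * w * ((bc.1 : ℝ))⁻¹ ≤ ((1 - x) * g i bc.2) * w * ((bc.1 : ℝ))⁻¹ := by
          apply mul_le_mul_of_nonneg_right
            (mul_le_mul_of_nonneg_right hstep hw0) (inv_nonneg.mpr hbpos.le)
      _ = (1 - x) * w * (g i bc.2 / (bc.1 : ℝ)) := by ring
  -- assemble
  have hFDP_nonneg : ∀ ω, 0 ≤ FDP m H0 (rejSD m τ (fun j => p j ω)) := by
    intro ω
    rw [FDP]
    exact div_nonneg (Nat.cast_nonneg _) (le_trans zero_le_one (le_max_right _ 1))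
  calc ∫ ω, FDP m H0 (rejSD m τ (fun j => p j ω)) ∂P
      ≤ ∫ ω, ∑ i ∈ H0, f i ω ∂P :=
        integral_mono_of_nonneg (Filter.Eventually.of_forall hFDP_nonneg)
          (integrable_finset_sum _ (fun i _ => hf_int i))
          (Filter.Eventually.of_forall hFDPle)
    _ = ∑ i ∈ H0, ∫ ω, f i ω ∂P := integral_finset_sum _ (fun i _ => hf_int i)
    _ ≤ ∑ i ∈ H0, ∫ ω, h i ω ∂P := Finset.sum_le_sum hkey
    _ = ∫ ω, ∑ i ∈ H0, h i ω ∂P := (integral_finset_sum _ (fun i _ => hh_int i)).symm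
    _ ≤ ∫ _ω, Bc ∂P :=
        integral_mono (integrable_finset_sum _ (fun i _ => hh_int i)) (integrable_const Bc)
          (fun ω => hhle ω)
    _ = Bc := by rw [integral_const]; simp [measure_univ]
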